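/- Let d ≥ 1. There exists a constant C > 0 depending only on d such that for every M ∈ ℤ₊, every x, y ∈ [0,M)^d, and every Borel probability measure η on (0,∞), one has Σ_{i ∈ Mℤ^d, i ∉ [-M,M]^d} ∫_{(0,∞)} g_u(x, y+i) η(du) ≤ C M^{-d}, where g_u(x,y) = (4πu)^{-d/2} exp(-|x-y|²/(4u)). -/

import Mathlib

open MeasureTheory Filter Set Topology



open MeasureTheory Filter Set Topology
open scoped ENNReal



lemma summable_gauss_aux {t : ℝ} (ht : 0 < t) :
    Summable (fun n : ℕ => Real.exp (-(t * ((n : ℝ) + 1) ^ 2))) := by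
  refine Summable.of_nonneg_of_le (f := fun n : ℕ => Real.exp (-t) ^ n)
    (fun n => (Real.exp_pos _).le) ?_ ?_
  · intro n
    show Real.exp (-(t * ((n : ℝ) + 1) ^ 2)) ≤ Real.exp (-t) ^ n
    rw [← Real.exp_nat_mul]
    apply Real.exp_le_exp.2
    have : (0:ℝ) ≤ n := Nat.cast_nonneg n
    nlinarith [mul_nonneg ht.le (mul_nonneg this this), mul_nonneg ht.le this]
  · exact summable_geometric_of_lt_one (Real.exp_pos _).le
      (Real.exp_lt_one_iff.2 (by linarith))

lemma tsum_gauss_le {t : ℝ} (ht : 0 < t) :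
    ∑' n : ℕ, Real.exp (-(t * ((n : ℝ) + 1) ^ 2)) ≤ Real.sqrt Real.pi / Real.sqrt t := by
  apply Summable.tsum_le_of_sum_range_le (summable_gauss_aux ht)
  intro N
  have hanti : AntitoneOn (fun x : ℝ => Real.exp (-(t * x ^ 2))) (Icc 0 (0 + (N:ℝ))) := by
    intro a ha b hb hab
    dsimp only
    apply Real.exp_le_exp.2
    have h2 : a ^ 2 ≤ b ^ 2 := pow_le_pow_left₀ ha.1 hab 2
    nlinarith
  have key := hanti.sum_le_integral
  have h1 : ∀ i : ℕ, (0:ℝ) + ((i:ℝ) + 1) = ((i:ℝ) + 1) := fun i => by ring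
  calc ∑ i ∈ Finset.range N, Real.exp (-(t * ((i:ℝ) + 1) ^ 2))
      = ∑ i ∈ Finset.range N, (fun x : ℝ => Real.exp (-(t * x ^ 2))) ((0:ℝ) + ((i + 1 : ℕ) : ℝ)) := by
        apply Finset.sum_congr rfl; intro i _; push_cast; ring_nf
    _ ≤ ∫ x in (0:ℝ)..(0 + (N:ℝ)), Real.exp (-(t * x ^ 2)) := key
    _ ≤ Real.sqrt Real.pi / Real.sqrt t := by
        rw [zero_add, intervalIntegral.integral_of_le (by positivity)]
        have hint : Integrable (fun x : ℝ => Real.exp (-t * x ^ 2)) := integrable_exp_neg_mul_sq ht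
        simp only [neg_mul] at hint
        calc ∫ x in Ioc (0:ℝ) (N:ℝ), Real.exp (-(t * x ^ 2))
            ≤ ∫ x : ℝ, Real.exp (-(t * x ^ 2)) := by
              apply setIntegral_le_integral hint
              filter_upwards with x using (Real.exp_pos _).le
          _ = Real.sqrt (Real.pi / t) := by
              simp only [← neg_mul]; exact integral_gaussian t
          _ = Real.sqrt Real.pi / Real.sqrt t := Real.sqrt_div Real.pi_pos.le t



/-- `nu m = |m| - 1` (truncated at 0). -/
def stmt6nu (m : ℤ) : ℕ := m.natAbs - 1

lemma stmt6_int_tsum (f : ℕ → ℝ≥0∞) :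
    ∑' m : ℤ, f (stmt6nu m) = 3 * f 0 + 2 * ∑' n : ℕ, f (n + 1) := by
  rw [tsum_of_nat_of_neg_add_one ENNReal.summable ENNReal.summable]
  have h1 : (fun n : ℕ => f (stmt6nu (n : ℤ))) = fun n : ℕ => f (n - 1) := by
    funext n; simp [stmt6nu]
  have h2 : (fun n : ℕ => f (stmt6nu (-((n : ℤ) + 1)))) = fun n : ℕ => f n := by
    funext n
    unfold stmt6nu
    rw [Int.natAbs_neg, show ((n:ℤ) + 1) = ((n + 1 : ℕ) : ℤ) by push_cast; ring,
      Int.natAbs_natCast, Nat.add_sub_cancel]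
  have hA : ∑' n : ℕ, f (n - 1) = f 0 + ∑' n : ℕ, f n := by
    rw [tsum_eq_zero_add' ENNReal.summable]
    simp only [Nat.zero_sub, Nat.add_sub_cancel]
  have hB : ∑' n : ℕ, f n = f 0 + ∑' n : ℕ, f (n + 1) :=
    tsum_eq_zero_add' ENNReal.summable
  rw [h1, h2, hA, hB]
  ring

lemma stmt6_pi_tsum (g : ℤ → ℝ≥0∞) : ∀ n : ℕ,
    ∑' j : Fin n → ℤ, ∏ k, g (j k) = (∑' m : ℤ, g m) ^ n := by
  intro n
  induction n with
  | zero =>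
    rw [pow_zero]
    rw [tsum_eq_single (default : Fin 0 → ℤ) (fun b hb => absurd (Subsingleton.elim b default) hb)]
    simp
  | succ n ih =>
    rw [← Equiv.tsum_eq (Fin.consEquiv (fun _ : Fin (n + 1) => ℤ))
      (fun j : Fin (n+1) → ℤ => ∏ k, g (j k))]
    have hc : ∀ p : ℤ × (Fin n → ℤ),
        (∏ k, g ((Fin.consEquiv (fun _ : Fin (n + 1) => ℤ)) p k))
          = g p.1 * ∏ k : Fin n, g (p.2 k) := by
      rintro ⟨a, b⟩
      rw [Fin.prod_univ_succ]
      simp [Fin.consEquiv]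
    calc ∑' p : ℤ × (Fin n → ℤ), ∏ k, g ((Fin.consEquiv (fun _ : Fin (n + 1) => ℤ)) p k)
        = ∑' p : ℤ × (Fin n → ℤ), g p.1 * ∏ k : Fin n, g (p.2 k) := tsum_congr hc
      _ = ∑' (a : ℤ) (b : Fin n → ℤ), g a * ∏ k : Fin n, g (b k) :=
          ENNReal.tsum_prod (f := fun (a : ℤ) (b : Fin n → ℤ) => g a * ∏ k : Fin n, g (b k))
      _ = (∑' m : ℤ, g m) * ∑' b : Fin n → ℤ, ∏ k : Fin n, g (b k) := by
          simp_rw [ENNReal.tsum_mul_left]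
          rw [ENNReal.tsum_mul_right]
      _ = (∑' m : ℤ, g m) ^ (n + 1) := by rw [ih]; ring





lemma stmt6_theta {t : ℝ} (ht : 0 < t) :
    ∑' m : ℤ, ENNReal.ofReal (Real.exp (-(t * ((stmt6nu m : ℕ) : ℝ) ^ 2)))
      ≤ ENNReal.ofReal (3 + 2 * (Real.sqrt Real.pi / Real.sqrt t)) := by
  rw [stmt6_int_tsum (fun k : ℕ => ENNReal.ofReal (Real.exp (-(t * (k : ℝ) ^ 2))))]
  have hs : (0:ℝ) ≤ Real.sqrt Real.pi / Real.sqrt t := by positivity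
  have h0 : ENNReal.ofReal (Real.exp (-(t * ((0:ℕ) : ℝ) ^ 2))) = 1 := by
    norm_num
  have h1 : ∑' n : ℕ, ENNReal.ofReal (Real.exp (-(t * (((n + 1 : ℕ)) : ℝ) ^ 2)))
      ≤ ENNReal.ofReal (Real.sqrt Real.pi / Real.sqrt t) := by
    have hc : ∀ n : ℕ, (((n + 1 : ℕ)) : ℝ) = (n : ℝ) + 1 := fun n => by push_cast; ring
    calc ∑' n : ℕ, ENNReal.ofReal (Real.exp (-(t * (((n + 1 : ℕ)) : ℝ) ^ 2)))
        = ENNReal.ofReal (∑' n : ℕ, Real.exp (-(t * ((n : ℝ) + 1) ^ 2))) := by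
          rw [ENNReal.ofReal_tsum_of_nonneg (fun n => (Real.exp_pos _).le) (summable_gauss_aux ht)]
          exact tsum_congr fun n => by rw [hc]
      _ ≤ ENNReal.ofReal (Real.sqrt Real.pi / Real.sqrt t) :=
          ENNReal.ofReal_le_ofReal (tsum_gauss_le ht)
  calc 3 * ENNReal.ofReal (Real.exp (-(t * ((0:ℕ) : ℝ) ^ 2)))
        + 2 * ∑' n : ℕ, ENNReal.ofReal (Real.exp (-(t * (((n + 1 : ℕ)) : ℝ) ^ 2)))
      ≤ 3 * 1 + 2 * ENNReal.ofReal (Real.sqrt Real.pi / Real.sqrt t) := by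
        rw [h0]; exact add_le_add_right (mul_le_mul_right h1 2) _
    _ = ENNReal.ofReal (3 + 2 * (Real.sqrt Real.pi / Real.sqrt t)) := by
        rw [ENNReal.ofReal_add (by norm_num) (by positivity), ENNReal.ofReal_mul (by norm_num)]
        norm_num




lemma stmt6_coord {M a b : ℝ} (hM : 0 < M) (ha0 : 0 ≤ a) (haM : a < M)
    (hb0 : 0 ≤ b) (hbM : b < M) (n : ℤ) :
    M ^ 2 * ((stmt6nu n : ℕ) : ℝ) ^ 2 ≤ (a - (b + M * (n : ℝ))) ^ 2 := by
  rcases le_or_gt n.natAbs 1 with h | h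
  · have : stmt6nu n = 0 := by unfold stmt6nu; omega
    rw [this]
    simp [sq_nonneg]
  · have h2 : 2 ≤ n.natAbs := h
    have hcast : ((stmt6nu n : ℕ) : ℝ) = (n.natAbs : ℝ) - 1 := by
      unfold stmt6nu
      have : (1:ℕ) ≤ n.natAbs := by omega
      push_cast [Nat.cast_sub this]
      ring
    rw [hcast]
    have habs : |(n : ℝ)| = (n.natAbs : ℝ) := by
      rw [Nat.cast_natAbs, Int.cast_abs]
    have hc : |a - b| < M := by
      rw [abs_lt]; constructor <;> linarith
    have hkey : M * ((n.natAbs : ℝ) - 1) ≤ |a - (b + M * (n : ℝ))| := by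
      have h1 : |M * (n : ℝ)| - |a - b| ≤ |a - (b + M * (n : ℝ))| := by
        have := abs_sub_abs_le_abs_sub (M * (n : ℝ)) (a - b)
        have heq : |M * (n:ℝ) - (a - b)| = |a - (b + M * (n:ℝ))| := by
          rw [← abs_neg]; congr 1; ring
        linarith [this, heq.le]
      have h2' : |M * (n : ℝ)| = M * (n.natAbs : ℝ) := by
        rw [abs_mul, abs_of_pos hM, habs]
      nlinarith
    have hnn : 0 ≤ M * ((n.natAbs : ℝ) - 1) := by
      have : (2:ℝ) ≤ (n.natAbs : ℝ) := by exact_mod_cast h2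
      nlinarith
    calc M ^ 2 * ((n.natAbs : ℝ) - 1) ^ 2 = (M * ((n.natAbs : ℝ) - 1)) ^ 2 := by ring
      _ ≤ |a - (b + M * (n : ℝ))| ^ 2 := pow_le_pow_left₀ hnn hkey 2
      _ = (a - (b + M * (n : ℝ))) ^ 2 := sq_abs _



lemma stmt6_calc (d : ℕ) {M u t : ℝ} (hM : 1 ≤ M) (hu : 0 < u) (ht : 0 < t)
    (htu : 8 * t * u = M ^ 2) :
    (4 * Real.pi * u) ^ (-(d:ℝ)/2) * Real.exp (-t)
        * (3 + 2 * (Real.sqrt Real.pi / Real.sqrt t)) ^ d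
      ≤ (2 * (Real.sqrt 2 * (3 + 2 * Real.sqrt Real.pi) / Real.sqrt Real.pi)) ^ d
          * (1 + (Nat.factorial d : ℝ)) * M ^ (-(d:ℝ)) := by
  have hπ : 0 < Real.pi := Real.pi_pos
  have hM0 : (0:ℝ) < M := by linarith
  set p := Real.sqrt Real.pi with hp_def
  set a := Real.sqrt t with ha_def
  set b := Real.sqrt u with hb_def
  have hp : 0 < p := Real.sqrt_pos.2 hπ
  have ha : 0 < a := Real.sqrt_pos.2 ht
  have hb : 0 < b := Real.sqrt_pos.2 hu
  have ha2 : a ^ 2 = t := Real.sq_sqrt ht.le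
  have hs2 : (0:ℝ) < Real.sqrt 2 := Real.sqrt_pos.2 (by norm_num)
  have hMab : M = 2 * Real.sqrt 2 * a * b := by
    have h8 : Real.sqrt 8 = 2 * Real.sqrt 2 := by
      rw [show (8:ℝ) = 2 ^ 2 * 2 by norm_num, Real.sqrt_mul (by positivity),
        Real.sqrt_sq (by norm_num)]
    calc M = Real.sqrt (M ^ 2) := (Real.sqrt_sq hM0.le).symm
      _ = Real.sqrt (8 * t * u) := by rw [htu]
      _ = Real.sqrt (8 * t) * Real.sqrt u := Real.sqrt_mul (by positivity) u
      _ = Real.sqrt 8 * Real.sqrt t * Real.sqrt u := by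
          rw [Real.sqrt_mul (by norm_num : (0:ℝ) ≤ 8)]
      _ = 2 * Real.sqrt 2 * a * b := by rw [h8]
  have hbase : (0:ℝ) < 4 * Real.pi * u := by positivity
  have h1 : (4 * Real.pi * u) ^ (-(d:ℝ)/2) = ((Real.sqrt (4 * Real.pi * u))⁻¹) ^ d := by
    have hhalf : (4 * Real.pi * u) ^ ((d:ℝ)/2) = (Real.sqrt (4 * Real.pi * u)) ^ d := by
      rw [show (d:ℝ)/2 = (1/2) * (d:ℝ) by ring, Real.rpow_mul hbase.le,
        ← Real.sqrt_eq_rpow, Real.rpow_natCast]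
    rw [show -(d:ℝ)/2 = -((d:ℝ)/2) by ring, Real.rpow_neg hbase.le, hhalf, inv_pow]
  have h2 : M ^ (-(d:ℝ)) = (M⁻¹) ^ d := by
    rw [Real.rpow_neg hM0.le, Real.rpow_natCast, inv_pow]
  have hsqrt4πu : Real.sqrt (4 * Real.pi * u) = 2 * p * b := by
    rw [show 4 * Real.pi * u = 2 ^ 2 * (Real.pi * u) by ring,
      Real.sqrt_mul (by positivity), Real.sqrt_sq (by norm_num),
      Real.sqrt_mul hπ.le]
    ring
  set K := Real.sqrt 2 * (3 + 2 * p) / p with hK_def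
  have hK : 0 < K := by positivity
  have hper : (Real.sqrt (4 * Real.pi * u))⁻¹ * (3 + 2 * (p / a)) ≤ K * (1 + t) * M⁻¹ := by
    rw [hsqrt4πu, hMab, hK_def, ← ha2]
    have lhs_eq : (2 * p * b)⁻¹ * (3 + 2 * (p / a)) = (3 * a + 2 * p) / (2 * p * a * b) := by
      rw [show 3 + 2 * (p / a) = (3 * a + 2 * p) / a by field_simp]
      rw [eq_div_iff (by positivity : (2 * p * a * b) ≠ 0), mul_comm]
      field_simp
    have rhs_eq : Real.sqrt 2 * (3 + 2 * p) / p * (1 + a ^ 2) * (2 * Real.sqrt 2 * a * b)⁻¹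
        = ((3 + 2 * p) * (1 + a ^ 2)) / (2 * p * a * b) := by
      field_simp
    rw [lhs_eq, rhs_eq]
    apply (div_le_div_iff_of_pos_right (by positivity)).2
    nlinarith [sq_nonneg (a - 1), mul_nonneg hp.le (sq_nonneg a)]
  have h3 : Real.exp (-t) * (1 + t) ^ d ≤ 2 ^ d * (1 + (Nat.factorial d : ℝ)) := by
    have hmax : (1 + t) ^ d ≤ 2 ^ d * (1 + t ^ d) := by
      have h1t : 1 + t ≤ 2 * max 1 t := by
        have := le_max_left (1:ℝ) t
        have := le_max_right (1:ℝ) t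
        linarith
      calc (1 + t) ^ d ≤ (2 * max 1 t) ^ d := pow_le_pow_left₀ (by positivity) h1t d
        _ = 2 ^ d * (max 1 t) ^ d := mul_pow 2 _ d
        _ ≤ 2 ^ d * (1 + t ^ d) := by
            apply mul_le_mul_of_nonneg_left _ (by positivity)
            rcases le_total t 1 with h | h
            · rw [max_eq_left h, one_pow]
              nlinarith [pow_nonneg ht.le d]
            · rw [max_eq_right h]
              nlinarith
    have htd : t ^ d * Real.exp (-t) ≤ (Nat.factorial d : ℝ) := by
      have h4 := Real.pow_div_factorial_le_exp t ht.le d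
      have hfac : (0:ℝ) < (Nat.factorial d : ℝ) := by
        exact_mod_cast Nat.factorial_pos d
      rw [div_le_iff₀ hfac] at h4
      rw [Real.exp_neg]
      rw [mul_inv_le_iff₀ (Real.exp_pos t)]
      linarith [h4]
    calc Real.exp (-t) * (1 + t) ^ d ≤ Real.exp (-t) * (2 ^ d * (1 + t ^ d)) :=
          mul_le_mul_of_nonneg_left hmax (Real.exp_nonneg _)
      _ = 2 ^ d * (Real.exp (-t) + t ^ d * Real.exp (-t)) := by ring
      _ ≤ 2 ^ d * (1 + (Nat.factorial d : ℝ)) := by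
          apply mul_le_mul_of_nonneg_left _ (by positivity)
          have e1 : Real.exp (-t) ≤ 1 := by
            rw [← Real.exp_zero]
            exact Real.exp_le_exp.2 (by linarith)
          linarith
  rw [h2]
  calc (4 * Real.pi * u) ^ (-(d:ℝ)/2) * Real.exp (-t) * (3 + 2 * (p / a)) ^ d
      = Real.exp (-t) * ((Real.sqrt (4 * Real.pi * u))⁻¹ * (3 + 2 * (p / a))) ^ d := by
        rw [h1, mul_pow]; ring
    _ ≤ Real.exp (-t) * (K * (1 + t) * M⁻¹) ^ d := by
        apply mul_le_mul_of_nonneg_left _ (Real.exp_nonneg _)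
        exact pow_le_pow_left₀ (by positivity) hper d
    _ = (Real.exp (-t) * (1 + t) ^ d) * (K ^ d * (M⁻¹) ^ d) := by
        rw [mul_pow, mul_pow]; ring
    _ ≤ (2 ^ d * (1 + (Nat.factorial d : ℝ))) * (K ^ d * (M⁻¹) ^ d) := by
        apply mul_le_mul_of_nonneg_right h3 (by positivity)
    _ = (2 * K) ^ d * (1 + (Nat.factorial d : ℝ)) * (M⁻¹) ^ d := by
        rw [mul_pow]; ring





lemma stmt6_pointwise (d : ℕ) (M : ℕ) (hM : 0 < M) (x y : Fin d → ℝ)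
    (hx : ∀ k, x k ∈ Set.Ico (0:ℝ) (M:ℝ)) (hy : ∀ k, y k ∈ Set.Ico (0:ℝ) (M:ℝ))
    {u : ℝ} (hu : 0 < u) :
    (∑' j : {j : Fin d → ℤ // ¬ ∀ k, |j k| ≤ (1:ℤ)},
        ENNReal.ofReal ((4 * Real.pi * u) ^ (-(d:ℝ)/2)
          * Real.exp (-(∑ k, (x k - (y k + (M:ℝ) * ((j.1 k : ℤ) : ℝ)))^2) / (4*u))))
      ≤ ENNReal.ofReal
          ((2 * (Real.sqrt 2 * (3 + 2 * Real.sqrt Real.pi) / Real.sqrt Real.pi)) ^ d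
            * (1 + (Nat.factorial d : ℝ)) * (M:ℝ) ^ (-(d:ℝ))) := by
  have hM1 : (1:ℝ) ≤ (M:ℝ) := by exact_mod_cast hM
  have hM0 : (0:ℝ) < (M:ℝ) := by linarith
  set t : ℝ := (M:ℝ)^2 / (8*u) with ht_def
  have ht : 0 < t := by positivity
  have htu : 8 * t * u = (M:ℝ)^2 := by rw [ht_def]; field_simp
  set g : ℤ → ℝ≥0∞ := fun m => ENNReal.ofReal (Real.exp (-(t * ((stmt6nu m : ℕ) : ℝ)^2)))
    with hg_def
  set c : ℝ≥0∞ := ENNReal.ofReal ((4 * Real.pi * u) ^ (-(d:ℝ)/2) * Real.exp (-t)) with hc_def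
  have hA : (0:ℝ) ≤ (4 * Real.pi * u) ^ (-(d:ℝ)/2) := Real.rpow_nonneg (by positivity) _
  -- per-term bound
  have hterm : ∀ j : {j : Fin d → ℤ // ¬ ∀ k, |j k| ≤ (1:ℤ)},
      ENNReal.ofReal ((4 * Real.pi * u) ^ (-(d:ℝ)/2)
          * Real.exp (-(∑ k, (x k - (y k + (M:ℝ) * ((j.1 k : ℤ) : ℝ)))^2) / (4*u)))
        ≤ c * ∏ k, g (j.1 k) := by
    intro j
    set r2 : ℝ := ∑ k, (x k - (y k + (M:ℝ) * ((j.1 k : ℤ) : ℝ)))^2 with hr2_def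
    set Q : ℝ := ∑ k, ((stmt6nu (j.1 k) : ℕ) : ℝ)^2 with hQ_def
    have hQk : ∀ k, (M:ℝ)^2 * ((stmt6nu (j.1 k) : ℕ) : ℝ)^2
        ≤ (x k - (y k + (M:ℝ) * ((j.1 k : ℤ) : ℝ)))^2 := fun k =>
      stmt6_coord hM0 (hx k).1 (hx k).2 (hy k).1 (hy k).2 (j.1 k)
    have hrQ : (M:ℝ)^2 * Q ≤ r2 := by
      rw [hQ_def, hr2_def, Finset.mul_sum]
      exact Finset.sum_le_sum fun k _ => hQk k
    obtain ⟨k₀, hk₀⟩ : ∃ k, 2 ≤ (j.1 k).natAbs := by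
      have := j.2
      push_neg at this
      obtain ⟨k, hk⟩ := this
      refine ⟨k, ?_⟩
      have h2 : (2:ℤ) ≤ |j.1 k| := hk
      rw [Int.abs_eq_natAbs] at h2
      exact_mod_cast h2
    have hν₀ : (1:ℝ) ≤ ((stmt6nu (j.1 k₀) : ℕ) : ℝ) := by
      have : 1 ≤ stmt6nu (j.1 k₀) := by unfold stmt6nu; omega
      exact_mod_cast this
    have hr1 : (M:ℝ)^2 ≤ r2 := by
      calc (M:ℝ)^2 = (M:ℝ)^2 * 1 := by ring
        _ ≤ (M:ℝ)^2 * ((stmt6nu (j.1 k₀) : ℕ) : ℝ)^2 := by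
            apply mul_le_mul_of_nonneg_left _ (by positivity)
            nlinarith
        _ ≤ (x k₀ - (y k₀ + (M:ℝ) * ((j.1 k₀ : ℤ) : ℝ)))^2 := hQk k₀
        _ ≤ r2 := by
            rw [hr2_def]
            exact Finset.single_le_sum (f := fun k => (x k - (y k + (M:ℝ) * ((j.1 k : ℤ) : ℝ)))^2)
              (fun k _ => sq_nonneg _) (Finset.mem_univ k₀)
    have hle : -r2 / (4*u) ≤ (-t) + ∑ k, -(t * ((stmt6nu (j.1 k) : ℕ) : ℝ)^2) := by
      have hsumQ : ∑ k, -(t * ((stmt6nu (j.1 k) : ℕ) : ℝ)^2) = -(t * Q) := by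
        rw [hQ_def, Finset.mul_sum, ← Finset.sum_neg_distrib]
      rw [hsumQ]
      have hdiv : ((M:ℝ)^2 + (M:ℝ)^2 * Q) / (8*u) ≤ r2 / (4*u) := by
        rw [show r2 / (4*u) = (r2 + r2) / (8*u) by ring]
        exact (div_le_div_iff_of_pos_right (by positivity)).2 (add_le_add hr1 hrQ)
      have hEq : (-t) + (-(t * Q)) = -(((M:ℝ)^2 + (M:ℝ)^2 * Q) / (8*u)) := by
        rw [ht_def]; ring
      calc -r2 / (4*u) = -(r2 / (4*u)) := neg_div _ _
        _ ≤ -(((M:ℝ)^2 + (M:ℝ)^2 * Q) / (8*u)) := neg_le_neg hdiv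
        _ = (-t) + (-(t * Q)) := hEq.symm
    have hexp : Real.exp (-r2 / (4*u))
        ≤ Real.exp (-t) * ∏ k, Real.exp (-(t * ((stmt6nu (j.1 k) : ℕ) : ℝ)^2)) := by
      rw [← Real.exp_sum, ← Real.exp_add]
      exact Real.exp_le_exp.2 hle
    calc ENNReal.ofReal ((4 * Real.pi * u) ^ (-(d:ℝ)/2) * Real.exp (-r2 / (4*u)))
        ≤ ENNReal.ofReal ((4 * Real.pi * u) ^ (-(d:ℝ)/2)
            * (Real.exp (-t) * ∏ k, Real.exp (-(t * ((stmt6nu (j.1 k) : ℕ) : ℝ)^2)))) :=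
          ENNReal.ofReal_le_ofReal (mul_le_mul_of_nonneg_left hexp hA)
      _ = c * ∏ k, g (j.1 k) := by
          rw [← mul_assoc,
            ENNReal.ofReal_mul (mul_nonneg hA (Real.exp_nonneg _)),
            ENNReal.ofReal_prod_of_nonneg (fun i _ => (Real.exp_nonneg _))]
  calc (∑' j : {j : Fin d → ℤ // ¬ ∀ k, |j k| ≤ (1:ℤ)},
        ENNReal.ofReal ((4 * Real.pi * u) ^ (-(d:ℝ)/2)
          * Real.exp (-(∑ k, (x k - (y k + (M:ℝ) * ((j.1 k : ℤ) : ℝ)))^2) / (4*u))))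
      ≤ ∑' j : {j : Fin d → ℤ // ¬ ∀ k, |j k| ≤ (1:ℤ)}, c * ∏ k, g (j.1 k) :=
        ENNReal.tsum_le_tsum hterm
    _ = c * ∑' j : {j : Fin d → ℤ // ¬ ∀ k, |j k| ≤ (1:ℤ)}, ∏ k, g (j.1 k) :=
        ENNReal.tsum_mul_left
    _ ≤ c * ∑' j : Fin d → ℤ, ∏ k, g (j k) := by
        apply mul_le_mul_right
        exact Summable.tsum_le_tsum_of_inj (Subtype.val) Subtype.val_injective
          (fun _ _ => zero_le) (fun _ => le_rfl) ENNReal.summable ENNReal.summable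
    _ = c * (∑' m : ℤ, g m) ^ d := by rw [stmt6_pi_tsum g d]
    _ ≤ c * (ENNReal.ofReal (3 + 2 * (Real.sqrt Real.pi / Real.sqrt t))) ^ d := by
        apply mul_le_mul_right
        exact pow_le_pow_left' (stmt6_theta ht) d
    _ ≤ ENNReal.ofReal
          ((2 * (Real.sqrt 2 * (3 + 2 * Real.sqrt Real.pi) / Real.sqrt Real.pi)) ^ d
            * (1 + (Nat.factorial d : ℝ)) * (M:ℝ) ^ (-(d:ℝ))) := by
        rw [hc_def, ← ENNReal.ofReal_pow (by positivity),
          ← ENNReal.ofReal_mul (by positivity)]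
        exact ENNReal.ofReal_le_ofReal (stmt6_calc d hM1 hu ht htu)





/-- There is `C > 0` depending only on d such that for every `M ∈ ℤ₊`,
all `x, y ∈ [0,M)^d`, and every Borel probability measure η on (0,∞),
`Σ_{i ∈ Mℤ^d, i ∉ [-M,M]^d} ∫ g_u(x, y+i) η(du) ≤ C M^{-d}`. -/
theorem stmt6 (d : ℕ) (hd : 1 ≤ d) :
    ∃ C > (0:ℝ), ∀ M : ℕ, 0 < M →
      ∀ x y : Fin d → ℝ,
        (∀ k, x k ∈ Set.Ico (0:ℝ) (M:ℝ)) → (∀ k, y k ∈ Set.Ico (0:ℝ) (M:ℝ)) →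
      ∀ η : Measure ℝ, IsProbabilityMeasure η →
      (∑' j : {j : Fin d → ℤ // ¬ ∀ k, |j k| ≤ (1:ℤ)},
          ∫⁻ u in Set.Ioi (0:ℝ),
            ENNReal.ofReal ((4 * Real.pi * u) ^ (-(d:ℝ)/2)
              * Real.exp (-(∑ k, (x k - (y k + (M:ℝ) * ((j.1 k : ℤ) : ℝ)))^2) / (4*u))) ∂η)
        ≤ ENNReal.ofReal (C * (M:ℝ) ^ (-(d:ℝ))) := by
  refine ⟨(2 * (Real.sqrt 2 * (3 + 2 * Real.sqrt Real.pi) / Real.sqrt Real.pi)) ^ d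
      * (1 + (Nat.factorial d : ℝ)), ?_, ?_⟩
  · have h2 : (0:ℝ) < Real.sqrt 2 := Real.sqrt_pos.2 (by norm_num)
    have hp : (0:ℝ) < Real.sqrt Real.pi := Real.sqrt_pos.2 Real.pi_pos
    have hfac : (0:ℝ) < 1 + (Nat.factorial d : ℝ) := by positivity
    positivity
  intro M hM x y hx hy η hη
  have hmeas : ∀ j : {j : Fin d → ℤ // ¬ ∀ k, |j k| ≤ (1:ℤ)},
      AEMeasurable (fun u : ℝ =>
        ENNReal.ofReal ((4 * Real.pi * u) ^ (-(d:ℝ)/2)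
          * Real.exp (-(∑ k, (x k - (y k + (M:ℝ) * ((j.1 k : ℤ) : ℝ)))^2) / (4*u))))
        (η.restrict (Set.Ioi 0)) := by
    intro j
    apply Measurable.aemeasurable
    apply Measurable.ennreal_ofReal
    apply Measurable.mul
    · exact (measurable_id.const_mul (4 * Real.pi)).pow measurable_const
    · exact (measurable_const.div (measurable_id.const_mul 4)).exp
  rw [← lintegral_tsum hmeas]
  calc (∫⁻ u in Set.Ioi (0:ℝ), ∑' j : {j : Fin d → ℤ // ¬ ∀ k, |j k| ≤ (1:ℤ)},
        ENNReal.ofReal ((4 * Real.pi * u) ^ (-(d:ℝ)/2)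
          * Real.exp (-(∑ k, (x k - (y k + (M:ℝ) * ((j.1 k : ℤ) : ℝ)))^2) / (4*u))) ∂η)
      ≤ ∫⁻ _ in Set.Ioi (0:ℝ),
          ENNReal.ofReal
            ((2 * (Real.sqrt 2 * (3 + 2 * Real.sqrt Real.pi) / Real.sqrt Real.pi)) ^ d
              * (1 + (Nat.factorial d : ℝ)) * (M:ℝ) ^ (-(d:ℝ))) ∂η := by
        apply setLIntegral_mono measurable_const
        intro u hu
        exact stmt6_pointwise d M hM x y hx hy hu
    _ = ENNReal.ofReal
          ((2 * (Real.sqrt 2 * (3 + 2 * Real.sqrt Real.pi) / Real.sqrt Real.pi)) ^ d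
            * (1 + (Nat.factorial d : ℝ)) * (M:ℝ) ^ (-(d:ℝ))) * η (Set.Ioi 0) :=
        setLIntegral_const _ _
    _ ≤ ENNReal.ofReal
          ((2 * (Real.sqrt 2 * (3 + 2 * Real.sqrt Real.pi) / Real.sqrt Real.pi)) ^ d
            * (1 + (Nat.factorial d : ℝ)) * (M:ℝ) ^ (-(d:ℝ))) * 1 :=
        mul_le_mul_right prob_le_one _
    _ = ENNReal.ofReal
          ((2 * (Real.sqrt 2 * (3 + 2 * Real.sqrt Real.pi) / Real.sqrt Real.pi)) ^ d
            * (1 + (Nat.factorial d : ℝ)) * (M:ℝ) ^ (-(d:ℝ))) := mul_one _
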